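/- Let p ∈ ℕ with p ≥ 1, let U ⊆ ℝ⁴ be open, and let φ : U → ℝ be a smooth function with 1 + (∂_tφ)^p > 0 on U solving the quasilinear wave equation −(1+(∂_tφ)^p)∂_t²φ + Δφ = 0 on U. Set ψ_γ := ∂_γφ for γ = 0,1,2,3 (so ψ₀ = ∂_tφ) and c := (1+ψ₀^p)^{−1/2}, and let g := diag(−c²,1,1,1). Let u : U → ℝ be a smooth optical function (g^{αβ}∂_αu∂_βu = 0, ∂_tu > 0) and define μ := 1/(c^{−2}∂_tu), L̂^α := −g^{αβ}∂_βu, L := μL̂, T̂ := c^{−1}(∂_t − L), T := c^{−1}μT̂, L̄ := c^{−2}μL + 2T, ĝ^{αβ} := g^{αβ} + (2μ)^{−1}(L^αL̄^β + L̄^αL^β), and the covariant wave operator □_gΨ := c^{−1}∂_α(c·g^{αβ}∂_βΨ). Then for each γ ∈ {0,1,2,3}: μ·□_gψ_γ = ½pμψ₀^{p−1}(Lψ₀)(Lψ_γ) + ½pc²ψ₀^{p−1}(Lψ₀)(Tψ_γ) + ½pc²ψ₀^{p−1}(Tψ₀)(Lψ_γ) − ½pc²μψ₀^{p−1}·ĝ^{αβ}∂_αψ₀∂_βψ_γ.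 -/

import Mathlib

noncomputable section

open scoped BigOperators

/-- Points of ℝ⁴ with coordinates (x⁰,x¹,x²,x³) = (t,x¹,x²,x³). -/
abbrev Pt : Type := Fin 4 → ℝ

/-- Partial derivative ∂_α f. -/
def pd (f : Pt → ℝ) (α : Fin 4) (x : Pt) : ℝ :=
  fderiv ℝ f x (Pi.single α 1)

/-- The acoustic metric g = diag(−c², 1, 1, 1). -/
def gMat (c : Pt → ℝ) (α β : Fin 4) (x : Pt) : ℝ :=
  if α = β then (if α = 0 then -(c x) ^ 2 else 1) else 0

/-- The inverse metric g⁻¹ = diag(−c⁻², 1, 1, 1). -/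
def gInv (c : Pt → ℝ) (α β : Fin 4) (x : Pt) : ℝ :=
  if α = β then (if α = 0 then -((c x) ^ 2)⁻¹ else 1) else 0

/-- Vf = V^α ∂_α f. -/
def vApp (V : Pt → Fin 4 → ℝ) (f : Pt → ℝ) (x : Pt) : ℝ :=
  ∑ α, V x α * pd f α x

/-- g(V, W) = g_{αβ} V^α W^β. -/
def gPair (c : Pt → ℝ) (V W : Pt → Fin 4 → ℝ) (x : Pt) : ℝ :=
  ∑ α, ∑ β, gMat c α β x * V x α * W x β

/-- L̂^α = −g^{αβ}∂_β u. -/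
def Lhat (c u : Pt → ℝ) (x : Pt) (α : Fin 4) : ℝ :=
  -∑ β, gInv c α β x * pd u β x

/-- The inverse foliation density μ = 1/(c⁻²∂_t u). -/
def invDens (c u : Pt → ℝ) (x : Pt) : ℝ :=
  (((c x) ^ 2)⁻¹ * pd u 0 x)⁻¹

/-- L = μ L̂  (so L⁰ = 1). -/
def Lvec (c u : Pt → ℝ) (x : Pt) (α : Fin 4) : ℝ :=
  invDens c u x * Lhat c u x α

/-- T̂ = c⁻¹(∂_t − L). -/
def That (c u : Pt → ℝ) (x : Pt) (α : Fin 4) : ℝ :=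
  (c x)⁻¹ * ((if α = 0 then 1 else 0) - Lvec c u x α)

/-- T = c⁻¹ μ T̂. -/
def Tvec (c u : Pt → ℝ) (x : Pt) (α : Fin 4) : ℝ :=
  (c x)⁻¹ * invDens c u x * That c u x α

/-- L̄ = c⁻²μ L + 2T. -/
def Lbar (c u : Pt → ℝ) (x : Pt) (α : Fin 4) : ℝ :=
  ((c x) ^ 2)⁻¹ * invDens c u x * Lvec c u x α + 2 * Tvec c u x α

/-- The induced inverse metric ĝ^{αβ} = g^{αβ} + (2μ)⁻¹(L^αL̄^β + L̄^αL^β). -/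
def ghat (c u : Pt → ℝ) (α β : Fin 4) (x : Pt) : ℝ :=
  gInv c α β x + (2 * invDens c u x)⁻¹ *
    (Lvec c u x α * Lbar c u x β + Lbar c u x α * Lvec c u x β)

/-- The covariant wave operator of g = diag(−c²,1,1,1) in coordinates:
□_gΨ = c⁻¹∂_α(c g^{αβ}∂_βΨ)  (note √|det g| = c). -/
def boxg (c Ψ : Pt → ℝ) (x : Pt) : ℝ :=
  (c x)⁻¹ * ∑ α, pd (fun y => c y * ∑ β, gInv c α β y * pd Ψ β y) α x

lemma top_add_one : ((⊤:ℕ∞) : WithTop ℕ∞) + 1 ≤ ((⊤:ℕ∞) : WithTop ℕ∞) := by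
  norm_num [ENat.add_one_le_iff]
lemma one_le_top' : (1 : WithTop ℕ∞) ≤ ((⊤:ℕ∞) : WithTop ℕ∞) := by exact_mod_cast le_top
lemma pd_congr {f g : Pt → ℝ} {x : Pt} (h : f =ᶠ[nhds x] g) (a : Fin 4) :
    pd f a x = pd g a x := by unfold pd; rw [h.fderiv_eq]
lemma hasFDerivAt_pd {f : Pt → ℝ} {f' : Pt →L[ℝ] ℝ} {x : Pt} (h : HasFDerivAt f f' x)
    (a : Fin 4) : pd f a x = f' (Pi.single a 1) := by rw [pd, h.fderiv]
lemma contDiffAt_pd {f : Pt → ℝ} {U : Set Pt} (hU : IsOpen U) (hf : ContDiffOn ℝ (⊤:ℕ∞) f U)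
    {x : Pt} (hx : x ∈ U) (a : Fin 4) : ContDiffAt ℝ (⊤:ℕ∞) (pd f a) x := by
  have h2 : ContDiffAt ℝ (⊤:ℕ∞) (fderiv ℝ f) x :=
    (hf.contDiffAt (hU.mem_nhds hx)).fderiv_right top_add_one
  exact (ContinuousLinearMap.apply ℝ ℝ (Pi.single a 1)).contDiff.contDiffAt.comp x h2
lemma contDiffOn_pd {f : Pt → ℝ} {U : Set Pt} (hU : IsOpen U) (hf : ContDiffOn ℝ (⊤:ℕ∞) f U)
    (a : Fin 4) : ContDiffOn ℝ (⊤:ℕ∞) (pd f a) U :=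
  fun y hy => (contDiffAt_pd hU hf hy a).contDiffWithinAt
lemma differentiableAt_pd {f : Pt → ℝ} {U : Set Pt} (hU : IsOpen U)
    (hf : ContDiffOn ℝ (⊤:ℕ∞) f U) {x : Pt} (hx : x ∈ U) (a : Fin 4) :
    DifferentiableAt ℝ (pd f a) x :=
  (contDiffAt_pd hU hf hx a).differentiableAt (by simp)
lemma pd_symm {f : Pt → ℝ} {U : Set Pt} (hU : IsOpen U) (hf : ContDiffOn ℝ (⊤:ℕ∞) f U)
    {x : Pt} (hx : x ∈ U) (a b : Fin 4) : pd (pd f a) b x = pd (pd f b) a x := by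
  have h2 : ContDiffAt ℝ (⊤:ℕ∞) (fderiv ℝ f) x :=
    (hf.contDiffAt (hU.mem_nhds hx)).fderiv_right top_add_one
  have hev : ∀ᶠ y in nhds x, HasFDerivAt f (fderiv ℝ f y) y := by
    filter_upwards [hU.mem_nhds hx] with y hy
    exact ((hf.contDiffAt (hU.mem_nhds hy)).differentiableAt (by simp)).hasFDerivAt
  have hd2 : HasFDerivAt (fderiv ℝ f) (fderiv ℝ (fderiv ℝ f) x) x :=
    (h2.differentiableAt (by simp)).hasFDerivAt
  have hsymm := second_derivative_symmetric_of_eventually hev hd2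
  have key : ∀ v : Fin 4, HasFDerivAt (pd f v)
      ((ContinuousLinearMap.apply ℝ ℝ (Pi.single v 1)).comp (fderiv ℝ (fderiv ℝ f) x)) x :=
    fun v => (ContinuousLinearMap.apply ℝ ℝ ((Pi.single v 1 : Pt))).hasFDerivAt.comp x hd2
  rw [hasFDerivAt_pd (key a) b, hasFDerivAt_pd (key b) a]
  exact hsymm _ _
lemma pd_mul {f g : Pt → ℝ} {x : Pt} (hf : DifferentiableAt ℝ f x)
    (hg : DifferentiableAt ℝ g x) (a : Fin 4) :
    pd (fun y => f y * g y) a x = pd f a x * g x + f x * pd g a x := by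
  rw [hasFDerivAt_pd (hf.hasFDerivAt.fun_mul hg.hasFDerivAt) a]
  simp [pd, smul_eq_mul]; ring
lemma pd_neg {f : Pt → ℝ} {x : Pt} (a : Fin 4) :
    pd (fun y => -f y) a x = -pd f a x := by
  simp [pd, fderiv_neg]
lemma pd_add {f g : Pt → ℝ} {x : Pt} (hf : DifferentiableAt ℝ f x)
    (hg : DifferentiableAt ℝ g x) (a : Fin 4) :
    pd (fun y => f y + g y) a x = pd f a x + pd g a x := by
  simp [pd, fderiv_fun_add hf hg]
lemma pd_sum {ι : Type*} {t : Finset ι} {f : ι → Pt → ℝ} {x : Pt}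
    (hf : ∀ i ∈ t, DifferentiableAt ℝ (f i) x) (a : Fin 4) :
    pd (fun y => ∑ i ∈ t, f i y) a x = ∑ i ∈ t, pd (f i) a x := by
  simp [pd, fderiv_fun_sum hf]

set_option maxHeartbeats 2000000 in
lemma box_eval
    (p : ℕ) (hp : 1 ≤ p) (U : Set Pt) (hU : IsOpen U) (φ : Pt → ℝ)
    (hφ : ContDiffOn ℝ (⊤ : ℕ∞) φ U)
    (hpos : ∀ x ∈ U, 0 < 1 + (pd φ 0 x) ^ p)
    (heq : ∀ x ∈ U,
      -(1 + (pd φ 0 x) ^ p) * pd (fun y => pd φ 0 y) 0 x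
        + ∑ i : Fin 3, pd (fun y => pd φ i.succ y) i.succ x = 0)
    (c : Pt → ℝ) (hcdef : ∀ x, c x = (Real.sqrt (1 + (pd φ 0 x) ^ p))⁻¹)
    {x : Pt} (hx : x ∈ U) (γ : Fin 4) :
    boxg c (pd φ γ) x
      = -(1/2) * p * (c x)^2 * (pd φ 0 x)^(p-1)
          * ∑ α, ∑ β, gInv c α β x * pd (pd φ 0) α x * pd (pd φ γ) β x := by
  have hsx : 0 < 1 + (pd φ 0 x) ^ p := hpos x hx
  set s : Pt → ℝ := fun y => 1 + (pd φ 0 y) ^ p with hsdef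
  have hr : 0 < Real.sqrt (s x) := Real.sqrt_pos.mpr hsx
  have hcx : c x = (Real.sqrt (s x))⁻¹ := hcdef x
  have hcfun : c = fun y => (Real.sqrt (s y))⁻¹ := funext hcdef
  -- differentiability
  have hφ2 : ∀ a : Fin 4, ContDiffOn ℝ (⊤:ℕ∞) (pd φ a) U := contDiffOn_pd hU hφ
  have hψ0 : DifferentiableAt ℝ (pd φ 0) x := differentiableAt_pd hU hφ hx 0
  have hA : ∀ b : Fin 4, DifferentiableAt ℝ (pd (pd φ 0) b) x :=
    fun b => differentiableAt_pd hU (hφ2 0) hx b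
  have hB : ∀ b : Fin 4, DifferentiableAt ℝ (pd (pd φ γ) b) x :=
    fun b => differentiableAt_pd hU (hφ2 γ) hx b
  -- derivative of s
  have hs : HasFDerivAt s (((p:ℝ) * (pd φ 0 x)^(p-1)) • fderiv ℝ (pd φ 0) x) x :=
    ((hasDerivAt_pow p (pd φ 0 x)).comp_hasFDerivAt x hψ0.hasFDerivAt).const_add 1
  have hsq : HasFDerivAt (fun y => Real.sqrt (s y))
      ((1 / (2 * Real.sqrt (s x))) • (((p:ℝ) * (pd φ 0 x)^(p-1)) • fderiv ℝ (pd φ 0) x)) x :=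
    (Real.hasDerivAt_sqrt hsx.ne').comp_hasFDerivAt x hs
  have hcder : HasFDerivAt c
      ((-(Real.sqrt (s x) ^ 2)⁻¹) • ((1 / (2 * Real.sqrt (s x))) •
        (((p:ℝ) * (pd φ 0 x)^(p-1)) • fderiv ℝ (pd φ 0) x))) x := by
    rw [hcfun]
    exact (hasDerivAt_inv hr.ne').comp_hasFDerivAt x hsq
  -- scalar values of derivatives
  have hpdsq : ∀ b : Fin 4, pd (fun y => Real.sqrt (s y)) b x
      = 1 / (2 * Real.sqrt (s x)) * ((p:ℝ) * (pd φ 0 x)^(p-1) * pd (pd φ 0) b x) := by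
    intro b
    rw [hasFDerivAt_pd hsq b]
    simp [smul_eq_mul, pd, mul_assoc]
  have hpdc : ∀ b : Fin 4, pd c b x
      = -(Real.sqrt (s x) ^ 2)⁻¹ * (1 / (2 * Real.sqrt (s x))
          * ((p:ℝ) * (pd φ 0 x)^(p-1) * pd (pd φ 0) b x)) := by
    intro b
    rw [hasFDerivAt_pd hcder b]
    simp [smul_eq_mul, pd, mul_assoc]
  have hpds : pd s γ x = (p:ℝ) * (pd φ 0 x)^(p-1) * pd (pd φ 0) γ x := by
    rw [hasFDerivAt_pd hs γ]
    simp [smul_eq_mul, pd]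
  -- the α = 0 summand
  have hg0 : ∀ y, (∑ β, gInv c 0 β y * pd (pd φ γ) β y)
      = -((c y)^2)⁻¹ * pd (pd φ γ) 0 y := by
    intro y
    rw [Fin.sum_univ_four]
    simp [gInv]
  have hSum0 : (fun y => c y * ∑ β, gInv c 0 β y * pd (pd φ γ) β y)
      =ᶠ[nhds x] (fun y => -Real.sqrt (s y) * pd (pd φ γ) 0 y) := by
    filter_upwards [hU.mem_nhds hx] with y hy
    have h1 : 0 < Real.sqrt (s y) := Real.sqrt_pos.mpr (hpos y hy)
    rw [hg0 y, hcdef y]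
    field_simp
    ring
  have e0 : pd (fun y => c y * ∑ β, gInv c 0 β y * pd (pd φ γ) β y) 0 x
      = -(1 / (2 * Real.sqrt (s x)) * ((p:ℝ) * (pd φ 0 x)^(p-1) * pd (pd φ 0) 0 x))
          * pd (pd φ γ) 0 x - Real.sqrt (s x) * pd (pd (pd φ γ) 0) 0 x := by
    rw [pd_congr hSum0 0,
      pd_mul (hsq.differentiableAt.fun_neg) (hB 0) 0, pd_neg, hpdsq 0]
    ring
  -- the α = i summands, i = 1,2,3
  have hSumi : ∀ i : Fin 4, i ≠ 0 →
      (fun y => c y * ∑ β, gInv c i β y * pd (pd φ γ) β y)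
        = fun y => c y * pd (pd φ γ) i y := by
    intro i hi
    funext y
    congr 1
    fin_cases i <;> simp_all [gInv, Fin.sum_univ_four]
  have ei : ∀ i : Fin 4, i ≠ 0 →
      pd (fun y => c y * ∑ β, gInv c i β y * pd (pd φ γ) β y) i x
      = -(Real.sqrt (s x) ^ 2)⁻¹ * (1 / (2 * Real.sqrt (s x))
            * ((p:ℝ) * (pd φ 0 x)^(p-1) * pd (pd φ 0) i x)) * pd (pd φ γ) i x
        + (Real.sqrt (s x))⁻¹ * pd (pd (pd φ γ) i) i x := by
    intro i hi
    rw [hSumi i hi, pd_mul hcder.differentiableAt (hB i) i, hpdc i, hcx]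
  -- differentiated wave equation
  have hwave : ∑ i : Fin 3, pd (pd (pd φ γ) i.succ) i.succ x
      - s x * pd (pd (pd φ γ) 0) 0 x
      = (p:ℝ) * (pd φ 0 x)^(p-1) * pd (pd φ 0) γ x * pd (pd φ 0) 0 x := by
    have hWf : (fun y => -(s y) * pd (pd φ 0) 0 y
        + ∑ i : Fin 3, pd (pd φ i.succ) i.succ y) =ᶠ[nhds x] (fun _ => (0:ℝ)) := by
      filter_upwards [hU.mem_nhds hx] with y hy
      exact heq y hy
    have h0 : pd (fun y => -(s y) * pd (pd φ 0) 0 y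
        + ∑ i : Fin 3, pd (pd φ i.succ) i.succ y) γ x = 0 := by
      rw [pd_congr hWf γ]
      simp [pd]
    rw [pd_add ((hs.differentiableAt.fun_neg).fun_mul (hA 0))
        (DifferentiableAt.fun_sum fun i _ => differentiableAt_pd hU (hφ2 i.succ) hx i.succ),
      pd_mul hs.differentiableAt.fun_neg (hA 0) γ, pd_neg, hpds,
      pd_sum (fun i _ => differentiableAt_pd hU (hφ2 i.succ) hx i.succ)] at h0
    -- commutation of third derivatives
    have hev0 : pd (pd φ 0) γ =ᶠ[nhds x] pd (pd φ γ) 0 := by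
      filter_upwards [hU.mem_nhds hx] with y hy
      exact pd_symm hU hφ hy 0 γ
    have com0 : pd (pd (pd φ 0) 0) γ x = pd (pd (pd φ γ) 0) 0 x := by
      rw [pd_symm hU (hφ2 0) hx 0 γ]
      exact pd_congr hev0 0
    have comi : ∀ i : Fin 3, pd (pd (pd φ i.succ) i.succ) γ x
        = pd (pd (pd φ γ) i.succ) i.succ x := by
      intro i
      have hevi : pd (pd φ i.succ) γ =ᶠ[nhds x] pd (pd φ γ) i.succ := by
        filter_upwards [hU.mem_nhds hx] with y hy
        exact pd_symm hU hφ hy i.succ γ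
      rw [pd_symm hU (hφ2 i.succ) hx i.succ γ]
      exact pd_congr hevi i.succ
    rw [com0] at h0
    rw [Fin.sum_univ_three] at h0 ⊢
    rw [comi 0, comi 1, comi 2] at h0
    linarith
  -- the symmetry pd (pd φ γ) 0 = pd (pd φ 0) γ at x
  have hsymγ : pd (pd φ γ) 0 x = pd (pd φ 0) γ x := pd_symm hU hφ hx γ 0
  -- assemble
  have hrr : Real.sqrt (s x) ^ 2 = s x := Real.sq_sqrt hsx.le
  have h33 : pd (pd (pd φ γ) 3) 3 x
      = s x * pd (pd (pd φ γ) 0) 0 x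
        + (p:ℝ) * (pd φ 0 x)^(p-1) * pd (pd φ 0) γ x * pd (pd φ 0) 0 x
        - pd (pd (pd φ γ) 1) 1 x - pd (pd (pd φ γ) 2) 2 x := by
    have h := hwave
    rw [Fin.sum_univ_three] at h
    have e1 : (0:Fin 3).succ = 1 := rfl
    have e2 : (1:Fin 3).succ = 2 := rfl
    have e3 : (2:Fin 3).succ = 3 := rfl
    rw [e1, e2, e3] at h
    linarith
  rw [boxg, Fin.sum_univ_four, e0, ei 1 (by decide), ei 2 (by decide), ei 3 (by decide)]
  simp only [Fin.sum_univ_four, gInv, Fin.reduceEq, reduceIte, mul_zero, zero_mul,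
    add_zero, zero_add, mul_one, one_mul]
  rw [hcx, h33, hsymγ]
  have hR2 : s x = Real.sqrt (s x) ^ 2 := (Real.sq_sqrt hsx.le).symm
  have hRpos : (0:ℝ) < Real.sqrt (s x) := hr
  generalize hRg : Real.sqrt (s x) = R at hR2 hRpos ⊢
  rw [hR2]
  field_simp
  ring

set_option maxHeartbeats 2000000 in
lemma frame_algebra (p : ℕ) (c u f h : Pt → ℝ) (x : Pt) (a : ℝ)
    (hc0 : c x ≠ 0) (hu0 : pd u 0 x ≠ 0) :
    invDens c u x * (-(1/2) * p * (c x)^2 * a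
        * ∑ α, ∑ β, gInv c α β x * pd f α x * pd h β x)
      = (1 / 2) * p * invDens c u x * a
            * vApp (Lvec c u) f x * vApp (Lvec c u) h x
          + (1 / 2) * p * (c x) ^ 2 * a
            * vApp (Lvec c u) f x * vApp (Tvec c u) h x
          + (1 / 2) * p * (c x) ^ 2 * a
            * vApp (Tvec c u) f x * vApp (Lvec c u) h x
          - (1 / 2) * p * (c x) ^ 2 * invDens c u x * a
            * ∑ α, ∑ β, ghat c u α β x * pd f α x * pd h β x := by
  simp only [vApp, invDens, Lvec, Lhat, Tvec, That, Lbar, ghat, gInv, Fin.sum_univ_four,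
    Fin.reduceEq, reduceIte, mul_zero, zero_mul, add_zero, zero_add, mul_one, one_mul,
    neg_neg, neg_zero, sub_zero, zero_sub]
  field_simp
  ring

/-- Equations (2.31)–(2.32): the derived covariant wave equations μ□_gψ_γ = F_γ
for the first derivatives ψ_γ = ∂_γφ of a solution φ of
−(1+(∂_tφ)^p)∂_t²φ + Δφ = 0. -/
theorem covariant_wave_equations_for_derivatives
    (p : ℕ) (hp : 1 ≤ p) (U : Set Pt) (hU : IsOpen U) (φ : Pt → ℝ)
    (hφ : ContDiffOn ℝ (⊤ : ℕ∞) φ U)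
    (hpos : ∀ x ∈ U, 0 < 1 + (pd φ 0 x) ^ p)
    (heq : ∀ x ∈ U,
      -(1 + (pd φ 0 x) ^ p) * pd (fun y => pd φ 0 y) 0 x
        + ∑ i : Fin 3, pd (fun y => pd φ i.succ y) i.succ x = 0)
    (c : Pt → ℝ) (hcdef : ∀ x, c x = (Real.sqrt (1 + (pd φ 0 x) ^ p))⁻¹)
    (u : Pt → ℝ) (hu : ContDiffOn ℝ (⊤ : ℕ∞) u U)
    (heik : ∀ x ∈ U, ∑ α, ∑ β, gInv c α β x * pd u α x * pd u β x = 0)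
    (hut : ∀ x ∈ U, 0 < pd u 0 x) :
    ∀ x ∈ U, ∀ γ : Fin 4,
      invDens c u x * boxg c (pd φ γ) x
        = (1 / 2) * p * invDens c u x * (pd φ 0 x) ^ (p - 1)
            * vApp (Lvec c u) (pd φ 0) x * vApp (Lvec c u) (pd φ γ) x
          + (1 / 2) * p * (c x) ^ 2 * (pd φ 0 x) ^ (p - 1)
            * vApp (Lvec c u) (pd φ 0) x * vApp (Tvec c u) (pd φ γ) x
          + (1 / 2) * p * (c x) ^ 2 * (pd φ 0 x) ^ (p - 1)
            * vApp (Tvec c u) (pd φ 0) x * vApp (Lvec c u) (pd φ γ) x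
          - (1 / 2) * p * (c x) ^ 2 * invDens c u x * (pd φ 0 x) ^ (p - 1)
            * ∑ α, ∑ β, ghat c u α β x * pd (pd φ 0) α x * pd (pd φ γ) β x := by
  intro x hx γ
  have hbox := box_eval p hp U hU φ hφ hpos heq c hcdef hx γ
  rw [hbox]
  have hc0 : c x ≠ 0 := by
    rw [hcdef x]
    have := Real.sqrt_pos.mpr (hpos x hx)
    positivity
  have hu0 : pd u 0 x ≠ 0 := (hut x hx).ne'
  exact frame_algebra p c u (pd φ 0) (pd φ γ) x ((pd φ 0 x) ^ (p-1)) hc0 hu0
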